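/- Suppose for each j ∈ [1,n] we are given a polynomial F_j ∈ R[x_1,…,x_n] not involving x_j, irreducible in R[x_1,…,x_n] and not divisible by any variable x_i, a monomial M_j in the variables {x_i : i ≠ j}, and we set F̂_j = F_j/M_j and x'_j = F̂_j/x_j ∈ 𝔽. Then the upper bound satisfies U(Σ) := R[x_1^{±1},…,x_n^{±1}] ∩ ⋂_{i=1}^n R[𝐱_i^{±1}] = ⋂_{j=1}^n R[x_1^{±1},…,x_{j-1}^{±1}, x_j, x'_j, x_{j+1}^{±1},…,x_n^{±1}]. -/

import Mathlib

open MvPolynomial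

/-- The ambient field `𝔽 = Frac(R[x_1, …, x_n])`. -/
noncomputable abbrev AmbientField (R : Type*) [CommRing R] [IsDomain R] (n : ℕ) :=
  FractionRing (MvPolynomial (Fin n) R)

/-- The cluster variable `x_i` viewed inside the ambient field. -/
noncomputable def xv (R : Type*) [CommRing R] [IsDomain R] {n : ℕ} (i : Fin n) :
    AmbientField R n :=
  algebraMap (MvPolynomial (Fin n) R) (AmbientField R n) (MvPolynomial.X i)

/-- The canonical embedding of polynomials into the ambient field. -/
noncomputable def toAmbient (R : Type*) [CommRing R] [IsDomain R] {n : ℕ}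
    (F : MvPolynomial (Fin n) R) : AmbientField R n :=
  algebraMap (MvPolynomial (Fin n) R) (AmbientField R n) F

section Aux

variable {R : Type*} [CommRing R] [IsDomain R] {n : ℕ}

lemma toAmbient_inj : Function.Injective (toAmbient R (n := n)) :=
  IsFractionRing.injective (MvPolynomial (Fin n) R) (AmbientField R n)

lemma toAmbient_ne_zero {p : MvPolynomial (Fin n) R} (hp : p ≠ 0) : toAmbient R p ≠ 0 := by
  intro h
  exact hp (toAmbient_inj (by simpa [toAmbient] using h))

lemma xv_ne_zero (i : Fin n) : xv R i ≠ 0 :=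
  toAmbient_ne_zero (MvPolynomial.X_ne_zero i)

/-- `p` does not involve the variable `x_j`. -/
def Avoids {R : Type*} [CommSemiring R] {n : ℕ} (j : Fin n) (p : MvPolynomial (Fin n) R) : Prop :=
  ∀ m ∈ p.support, m j = 0

lemma Avoids.coeff_eq_zero {R : Type*} [CommSemiring R] {n : ℕ} {j : Fin n}
    {p : MvPolynomial (Fin n) R} (h : Avoids j p)
    {m : Fin n →₀ ℕ} (hm : m j ≠ 0) : coeff m p = 0 := by
  by_contra hc
  exact hm (h m (by simpa [MvPolynomial.mem_support_iff] using hc))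

lemma Avoids.mul {R : Type*} [CommSemiring R] {n : ℕ} {j : Fin n}
    {p q : MvPolynomial (Fin n) R} (hp : Avoids j p) (hq : Avoids j q) :
    Avoids j (p * q) := by
  intro m hm
  classical
  obtain ⟨a, ha, b, hb, rfl⟩ := Finset.mem_add.mp (MvPolynomial.support_mul p q hm)
  simp [hp a ha, hq b hb]

lemma Avoids.C {R : Type*} [CommSemiring R] {n : ℕ} {j : Fin n} (r : R) :
    Avoids j (MvPolynomial.C r : MvPolynomial (Fin n) R) := by
  intro m hm
  rw [MvPolynomial.mem_support_iff, MvPolynomial.coeff_C] at hm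
  rcases eq_or_ne (0 : Fin n →₀ ℕ) m with rfl | h
  · rfl
  · simp [if_neg h] at hm

lemma Avoids.one {R : Type*} [CommSemiring R] {n : ℕ} {j : Fin n} :
    Avoids j (1 : MvPolynomial (Fin n) R) := by
  simpa using Avoids.C (j := j) (1 : R)

lemma Avoids.add {R : Type*} [CommSemiring R] {n : ℕ} {j : Fin n}
    {p q : MvPolynomial (Fin n) R} (hp : Avoids j p) (hq : Avoids j q) : Avoids j (p + q) := by
  intro m hm
  by_contra h
  have : coeff m (p + q) = 0 := by
    rw [MvPolynomial.coeff_add, hp.coeff_eq_zero h, hq.coeff_eq_zero h, add_zero]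
  exact (MvPolynomial.mem_support_iff.mp hm) this

lemma Avoids.prod {R : Type*} [CommSemiring R] {n : ℕ} {j : Fin n} {ι : Type*} (s : Finset ι)
    (f : ι → MvPolynomial (Fin n) R) (h : ∀ i ∈ s, Avoids j (f i)) :
    Avoids j (∏ i ∈ s, f i) := by
  classical
  induction s using Finset.induction with
  | empty => simpa using Avoids.one
  | @insert a s hx ih =>
    rw [Finset.prod_insert hx]
    exact (h _ (Finset.mem_insert_self _ _)).mul
      (ih fun i hi => h i (Finset.mem_insert_of_mem hi))

/-- "no `x_j`" fractions: `z = p / q` with both `p, q` avoiding `x_j`. -/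
def NXJ (R : Type*) [CommRing R] [IsDomain R] {n : ℕ} (j : Fin n) (z : AmbientField R n) :
    Prop :=
  ∃ p q : MvPolynomial (Fin n) R, Avoids j p ∧ Avoids j q ∧ q ≠ 0 ∧
    z * toAmbient R q = toAmbient R p


lemma Avoids.neg {j : Fin n} {p : MvPolynomial (Fin n) R} (hp : Avoids j p) :
    Avoids j (-p) := by
  intro m hm
  exact hp m (by simpa using hm)

lemma toAmbient_mul (p q : MvPolynomial (Fin n) R) :
    toAmbient R (p * q) = toAmbient R p * toAmbient R q := map_mul _ _ _

lemma toAmbient_add (p q : MvPolynomial (Fin n) R) :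
    toAmbient R (p + q) = toAmbient R p + toAmbient R q := map_add _ _ _

lemma toAmbient_one : toAmbient R (1 : MvPolynomial (Fin n) R) = 1 := map_one _

lemma toAmbient_pow (p : MvPolynomial (Fin n) R) (k : ℕ) :
    toAmbient R (p ^ k) = toAmbient R p ^ k := map_pow _ _ _

lemma toAmbient_X (i : Fin n) : toAmbient R (MvPolynomial.X i) = xv R i := rfl

lemma NXJ.ofPoly {j : Fin n} {p : MvPolynomial (Fin n) R} (hp : Avoids j p) :
    NXJ R j (toAmbient R p) :=
  ⟨p, 1, hp, Avoids.one, one_ne_zero, by rw [toAmbient_one, mul_one]⟩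

lemma NXJ.zero (j : Fin n) : NXJ R j (0 : AmbientField R n) := by
  simpa [toAmbient] using NXJ.ofPoly (Avoids.C (j := j) (0 : R))

lemma NXJ.algebraMap' (j : Fin n) (r : R) : NXJ R j (algebraMap R (AmbientField R n) r) := by
  have : algebraMap R (AmbientField R n) r = toAmbient R (MvPolynomial.C r) := by
    rw [toAmbient, ← MvPolynomial.algebraMap_eq, ← IsScalarTower.algebraMap_apply]
  rw [this]
  exact NXJ.ofPoly (Avoids.C r)

lemma NXJ.add {j : Fin n} {z w : AmbientField R n} (hz : NXJ R j z) (hw : NXJ R j w) :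
    NXJ R j (z + w) := by
  obtain ⟨p, q, hp, hq, hq0, he⟩ := hz
  obtain ⟨p', q', hp', hq', hq0', he'⟩ := hw
  refine ⟨p * q' + p' * q, q * q', hp.mul hq' |>.add (hp'.mul hq), hq.mul hq',
    mul_ne_zero hq0 hq0', ?_⟩
  rw [toAmbient_add, toAmbient_mul, toAmbient_mul, toAmbient_mul, ← he, ← he']
  ring

lemma NXJ.mul {j : Fin n} {z w : AmbientField R n} (hz : NXJ R j z) (hw : NXJ R j w) :
    NXJ R j (z * w) := by
  obtain ⟨p, q, hp, hq, hq0, he⟩ := hz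
  obtain ⟨p', q', hp', hq', hq0', he'⟩ := hw
  refine ⟨p * p', q * q', hp.mul hp', hq.mul hq', mul_ne_zero hq0 hq0', ?_⟩
  rw [toAmbient_mul, toAmbient_mul, ← he, ← he']
  ring

lemma NXJ.neg {j : Fin n} {z : AmbientField R n} (hz : NXJ R j z) : NXJ R j (-z) := by
  obtain ⟨p, q, hp, hq, hq0, he⟩ := hz
  refine ⟨-p, q, hp.neg, hq, hq0, ?_⟩
  have h2 : toAmbient R (-p) = -toAmbient R p := map_neg _ _
  rw [h2, ← he]
  ring

lemma NXJ.smul {j : Fin n} {z : AmbientField R n} (hz : NXJ R j z) (r : R) :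
    NXJ R j (r • z) := by
  rw [Algebra.smul_def]
  exact (NXJ.algebraMap' j r).mul hz

lemma NXJ.sum {j : Fin n} {ι : Type*} (s : Finset ι) (f : ι → AmbientField R n)
    (h : ∀ i ∈ s, NXJ R j (f i)) : NXJ R j (∑ i ∈ s, f i) := by
  classical
  induction s using Finset.induction with
  | empty => simpa using NXJ.zero j
  | @insert a s hx ih =>
    rw [Finset.sum_insert hx]
    exact (h _ (Finset.mem_insert_self _ _)).add
      (ih fun i hi => h i (Finset.mem_insert_of_mem hi))

lemma NXJ.inv {j : Fin n} {z : AmbientField R n} (hz : NXJ R j z) : NXJ R j z⁻¹ := by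
  rcases eq_or_ne z 0 with rfl | h0
  · simpa using NXJ.zero j
  obtain ⟨p, q, hp, hq, hq0, he⟩ := hz
  have hp0 : p ≠ 0 := by
    intro h
    rw [h] at he
    simp only [toAmbient, map_zero] at he
    rcases mul_eq_zero.mp he with h | h
    · exact h0 h
    · exact toAmbient_ne_zero hq0 h
  refine ⟨q, p, hq, hp, hp0, ?_⟩
  calc z⁻¹ * toAmbient R p = z⁻¹ * (z * toAmbient R q) := by rw [he]
    _ = toAmbient R q := by
        rw [← mul_assoc, inv_mul_cancel₀ h0, one_mul]

lemma NXJ.one (j : Fin n) : NXJ R j (1 : AmbientField R n) := by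
  have := NXJ.algebraMap' (R := R) (n := n) j 1
  rwa [map_one] at this

lemma NXJ.pow {j : Fin n} {z : AmbientField R n} (hz : NXJ R j z) (k : ℕ) :
    NXJ R j (z ^ k) := by
  induction k with
  | zero => simpa using NXJ.one j
  | succ k ih => rw [pow_succ]; exact ih.mul hz

lemma NXJ.zpow {j : Fin n} {z : AmbientField R n} (hz : NXJ R j z) (k : ℤ) :
    NXJ R j (z ^ k) := by
  rcases k with k | k
  · simpa using hz.pow k
  · rw [zpow_negSucc]
    exact (hz.pow (k + 1)).inv

lemma Avoids.X {j k : Fin n} (h : k ≠ j) : Avoids j (MvPolynomial.X k : MvPolynomial (Fin n) R) := by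
  intro m hm
  rw [MvPolynomial.mem_support_iff, MvPolynomial.coeff_X'] at hm
  rcases eq_or_ne (Finsupp.single k 1) m with rfl | hne
  · simp [Finsupp.single_apply, h]
  · simp [if_neg hne] at hm

lemma NXJ.xv {j k : Fin n} (h : k ≠ j) : NXJ R j (xv R k) :=
  NXJ.ofPoly (Avoids.X h)


lemma coeff_avoids_mul_X_pow {R : Type*} [CommSemiring R] {n : ℕ} {j : Fin n}
    {A : MvPolynomial (Fin n) R} (hA : Avoids j A) (m : Fin n →₀ ℕ) (hm : m j = 0)
    (k k' : ℕ) :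
    coeff (m + Finsupp.single j k') (A * (MvPolynomial.X j : MvPolynomial (Fin n) R) ^ k) =
      if k = k' then coeff m A else 0 := by
  classical
  rw [MvPolynomial.X_pow_eq_monomial, coeff_mul_monomial']
  by_cases h : k = k'
  · subst h
    rw [if_pos le_add_self, if_pos rfl, add_tsub_cancel_right, mul_one]
  · rw [if_neg h]
    by_cases hle : Finsupp.single j k ≤ m + Finsupp.single j k'
    · rw [if_pos hle, mul_one]
      apply hA.coeff_eq_zero
      have h1 : k ≤ m j + k' := by
        have := hle j
        simpa [Finsupp.single_apply] using this
      have h2 : (m + Finsupp.single j k' - Finsupp.single j k) j = m j + k' - k := by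
        simp [Finsupp.tsub_apply, Finsupp.single_apply]
      omega
    · rw [if_neg hle]

set_option maxHeartbeats 1600000 in
lemma nxj_indep {j : Fin n} (E : Finset ℤ) (c : ℤ → AmbientField R n)
    (hc : ∀ d ∈ E, NXJ R j (c d))
    (hsum : ∑ d ∈ E, c d * (xv R j) ^ d = 0) :
    ∀ d ∈ E, c d = 0 := by
  classical
  set c' : ℤ → AmbientField R n := fun d => if d ∈ E then c d else 0 with hc'def
  have hc' : ∀ d : ℤ, NXJ R j (c' d) := by
    intro d
    by_cases hd : d ∈ E
    · simpa [c', hd] using hc d hd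
    · simpa [c', hd] using NXJ.zero j
  choose p q hp hq hq0 heq using hc'
  set N : ℕ := E.sup fun d => (-d).toNat with hNdef
  have hN : ∀ d ∈ E, (0:ℤ) ≤ d + N := by
    intro d hd
    have h1 := Finset.le_sup (f := fun d : ℤ => (-d).toNat) hd
    have h2 : ((-d).toNat : ℤ) ≤ (N : ℤ) := by exact_mod_cast h1
    omega
  set Q : MvPolynomial (Fin n) R := ∏ e ∈ E, q e with hQdef
  have hQ0 : Q ≠ 0 := Finset.prod_ne_zero_iff.mpr fun e _ => hq0 e
  set P : MvPolynomial (Fin n) R :=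
    ∑ d ∈ E, p d * (∏ e ∈ E.erase d, q e) * MvPolynomial.X j ^ (d + N).toNat with hPdef
  have key : ∀ d ∈ E,
      toAmbient R (p d * (∏ e ∈ E.erase d, q e) * MvPolynomial.X j ^ (d + N).toNat)
      = (c d * xv R j ^ d) * (toAmbient R Q * xv R j ^ (N:ℤ)) := by
    intro d hd
    have h1 : toAmbient R (p d) = c d * toAmbient R (q d) := by
      have := heq d
      rw [hc'def] at this
      simp only [if_pos hd] at this
      exact this.symm
    have h2 : toAmbient R Q = toAmbient R (q d) * toAmbient R (∏ e ∈ E.erase d, q e) := by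
      rw [hQdef, ← toAmbient_mul, Finset.mul_prod_erase _ _ hd]
    have h3 : toAmbient R (MvPolynomial.X j ^ (d + N).toNat : MvPolynomial (Fin n) R)
        = xv R j ^ d * xv R j ^ (N:ℤ) := by
      rw [toAmbient_pow, toAmbient_X, ← zpow_natCast (xv R j) (d + N).toNat,
        Int.toNat_of_nonneg (hN d hd), zpow_add₀ (xv_ne_zero j)]
    rw [toAmbient_mul, toAmbient_mul, h1, h2, h3]
    ring
  have hP0 : toAmbient R P = 0 := by
    have : toAmbient R P = ∑ d ∈ E,
        toAmbient R (p d * (∏ e ∈ E.erase d, q e) * MvPolynomial.X j ^ (d + N).toNat) := by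
      rw [hPdef]; exact map_sum _ _ _
    rw [this, Finset.sum_congr rfl key, ← Finset.sum_mul, hsum, zero_mul]
  have hPz : P = 0 := by
    apply toAmbient_inj
    rw [hP0]
    exact (map_zero _).symm
  intro d₀ hd₀
  set A : MvPolynomial (Fin n) R := p d₀ * ∏ e ∈ E.erase d₀, q e with hAdef
  have hAav : Avoids j A :=
    (hp d₀).mul (Avoids.prod _ _ fun e _ => hq e)
  have hA0 : A = 0 := by
    apply MvPolynomial.ext
    intro m
    rw [MvPolynomial.coeff_zero]
    by_cases hmj : m j = 0
    · have hco : coeff (m + Finsupp.single j (d₀ + N).toNat) P = coeff m A := by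
        rw [hPdef, MvPolynomial.coeff_sum]
        rw [Finset.sum_eq_single d₀]
        · rw [coeff_avoids_mul_X_pow ((hp d₀).mul (Avoids.prod _ _ fun e _ => hq e)) m hmj,
            if_pos rfl, hAdef]
        · intro d hd hne
          rw [coeff_avoids_mul_X_pow ((hp d).mul (Avoids.prod _ _ fun e _ => hq e)) m hmj,
            if_neg]
          intro hcon
          apply hne
          have h1 := hN d hd
          have h2 := hN d₀ hd₀
          omega
        · intro h
          exact absurd hd₀ h
      rw [hPz, MvPolynomial.coeff_zero] at hco
      exact hco.symm
    · exact hAav.coeff_eq_zero hmj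
  have hp0 : p d₀ = 0 := by
    rcases mul_eq_zero.mp hA0 with h | h
    · exact h
    · exact absurd h (Finset.prod_ne_zero_iff.mpr fun e _ => hq0 e)
  have := heq d₀
  rw [hc'def] at this
  simp only [if_pos hd₀, hp0] at this
  have hq0' : toAmbient R (q d₀) ≠ 0 := toAmbient_ne_zero (hq0 d₀)
  have : c d₀ * toAmbient R (q d₀) = 0 := by
    rw [this]; exact map_zero _
  exact (mul_eq_zero.mp this).resolve_right hq0'


lemma NXJ.prod {j : Fin n} {ι : Type*} (s : Finset ι) (f : ι → AmbientField R n)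
    (h : ∀ i ∈ s, NXJ R j (f i)) : NXJ R j (∏ i ∈ s, f i) := by
  classical
  induction s using Finset.induction with
  | empty => simpa using NXJ.one j
  | @insert a s hx ih =>
    rw [Finset.prod_insert hx]
    exact (h _ (Finset.mem_insert_self _ _)).mul
      (ih fun i hi => h i (Finset.mem_insert_of_mem hi))

lemma Avoids.monomial {R : Type*} [CommSemiring R] {n : ℕ} {j : Fin n} {δ : Fin n →₀ ℕ}
    (hδ : δ j = 0) (r : R) : Avoids j (MvPolynomial.monomial δ r : MvPolynomial (Fin n) R) := by
  intro m hm
  classical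
  rcases Finset.mem_singleton.mp (MvPolynomial.support_monomial_subset hm) with rfl
  exact hδ

lemma zpow_mem_pair {A : Subalgebra R (AmbientField R n)} {z : AmbientField R n}
    (hz : z ∈ A) (hzi : z⁻¹ ∈ A) (t : ℤ) : z ^ t ∈ A := by
  rcases t with k | k
  · simpa using pow_mem hz k
  · rw [zpow_negSucc, ← inv_pow]
    exact pow_mem hzi (k + 1)

/-- Every element of the monoid closure of `{xᵢ, xᵢ⁻¹}` is a Laurent monomial. -/
lemma closure_L_shape {z : AmbientField R n}
    (hz : z ∈ Submonoid.closure (⋃ i : Fin n, ({xv R i, (xv R i)⁻¹} : Set (AmbientField R n)))) :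
    ∃ e : Fin n → ℤ, z = ∏ k, xv R k ^ e k := by
  classical
  induction hz using Submonoid.closure_induction with
  | mem x hx =>
    obtain ⟨i, hi⟩ := Set.mem_iUnion.mp hx
    have hone : ∀ i : Fin n, ∀ t : ℤ, xv R i ^ t = ∏ k, xv R k ^ (Pi.single i t : Fin n → ℤ) k := by
      intro i t
      rw [Fintype.prod_eq_single i (fun k hk => by rw [Pi.single_eq_of_ne hk, zpow_zero])]
      rw [Pi.single_eq_same]
    rcases hi with rfl | hx'
    · exact ⟨Pi.single i 1, by simpa using hone i 1⟩
    · rcases Set.mem_singleton_iff.mp hx' with rfl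
      exact ⟨Pi.single i (-1), by simpa [zpow_neg] using hone i (-1)⟩
  | one => exact ⟨0, by simp⟩
  | mul x y hx hy ihx ihy =>
    obtain ⟨e, rfl⟩ := ihx
    obtain ⟨e', rfl⟩ := ihy
    exact ⟨e + e', by
      rw [← Finset.prod_mul_distrib]
      exact Finset.prod_congr rfl fun k _ => (zpow_add₀ (xv_ne_zero k) _ _).symm⟩

/-- Every element of the monoid closure of `{x', x'⁻¹} ∪ {xₖ, xₖ⁻¹ : k ≠ j}` has the shape
`x'^m ∏ₖ xₖ^{eₖ}` with `e j = 0`. -/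
lemma closure_A_shape {j : Fin n} {w : AmbientField R n} (hw : w ≠ 0) {z : AmbientField R n}
    (hz : z ∈ Submonoid.closure (({w, w⁻¹} : Set (AmbientField R n)) ∪
      ⋃ k ∈ ({k : Fin n | k ≠ j}), ({xv R k, (xv R k)⁻¹} : Set (AmbientField R n)))) :
    ∃ m : ℤ, ∃ e : Fin n → ℤ, e j = 0 ∧ z = w ^ m * ∏ k, xv R k ^ e k := by
  classical
  have hone : ∀ i : Fin n, ∀ t : ℤ, xv R i ^ t = ∏ k, xv R k ^ (Pi.single i t : Fin n → ℤ) k := by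
    intro i t
    rw [Fintype.prod_eq_single i (fun k hk => by rw [Pi.single_eq_of_ne hk, zpow_zero])]
    rw [Pi.single_eq_same]
  induction hz using Submonoid.closure_induction with
  | mem x hx =>
    rcases hx with hx | hx
    · rcases hx with rfl | hx'
      · exact ⟨1, 0, rfl, by simp⟩
      · rcases Set.mem_singleton_iff.mp hx' with rfl
        exact ⟨-1, 0, rfl, by simp⟩
    · obtain ⟨i, hi, hmem⟩ := Set.mem_iUnion₂.mp hx
      have hij : i ≠ j := hi
      rcases hmem with rfl | hx'
      · refine ⟨0, Pi.single i 1, by rw [Pi.single_eq_of_ne (Ne.symm hij)], ?_⟩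
        simpa using hone i 1
      · rcases Set.mem_singleton_iff.mp hx' with rfl
        refine ⟨0, Pi.single i (-1), by rw [Pi.single_eq_of_ne (Ne.symm hij)], ?_⟩
        simpa [zpow_neg] using hone i (-1)
  | one => exact ⟨0, 0, rfl, by simp⟩
  | mul x y hx hy ihx ihy =>
    obtain ⟨m, e, hej, rfl⟩ := ihx
    obtain ⟨m', e', hej', rfl⟩ := ihy
    refine ⟨m + m', e + e', by simp [hej, hej'], ?_⟩
    have h1 : ∀ k ∈ Finset.univ, xv R k ^ (e + e') k = xv R k ^ e k * xv R k ^ e' k :=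
      fun k _ => zpow_add₀ (xv_ne_zero k) _ _
    rw [zpow_add₀ hw, Finset.prod_congr rfl h1, Finset.prod_mul_distrib]
    ring

/-- The image of a polynomial avoiding `x_j` lies in any subalgebra containing the other
variables. -/
lemma toAmbient_mem_of_avoids {A : Subalgebra R (AmbientField R n)} {j : Fin n}
    (h : ∀ k, k ≠ j → xv R k ∈ A) {p : MvPolynomial (Fin n) R} (hp : Avoids j p) :
    toAmbient R p ∈ A := by
  classical
  rw [← MvPolynomial.support_sum_monomial_coeff p]
  rw [show toAmbient R (∑ v ∈ p.support, MvPolynomial.monomial v (coeff v p)) =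
    ∑ v ∈ p.support, toAmbient R (MvPolynomial.monomial v (coeff v p)) from map_sum _ _ _]
  apply sum_mem
  intro m hm
  rw [MvPolynomial.monomial_eq]
  rw [show toAmbient R (MvPolynomial.C (coeff m p) * m.prod fun k e => MvPolynomial.X k ^ e) =
    toAmbient R (MvPolynomial.C (coeff m p)) *
      toAmbient R (m.prod fun k e => MvPolynomial.X k ^ e) from map_mul _ _ _]
  apply mul_mem
  · have : toAmbient R (MvPolynomial.C (coeff m p)) =
        algebraMap R (AmbientField R n) (coeff m p) := by
      rw [toAmbient, ← MvPolynomial.algebraMap_eq, ← IsScalarTower.algebraMap_apply]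
    rw [this]
    exact Subalgebra.algebraMap_mem A _
  · rw [Finsupp.prod, show toAmbient R (∏ k ∈ m.support, MvPolynomial.X k ^ m k) =
      ∏ k ∈ m.support, toAmbient R (MvPolynomial.X k ^ m k) from map_prod _ _ _]
    apply prod_mem
    intro k hk
    rw [toAmbient_pow, toAmbient_X]
    apply pow_mem
    apply h
    intro hkj
    subst hkj
    exact (Finsupp.mem_support_iff.mp hk) (hp m hm)

lemma toAmbient_monomial_one (δ : Fin n →₀ ℕ) :
    toAmbient R (MvPolynomial.monomial δ (1 : R)) = ∏ k ∈ δ.support, xv R k ^ δ k := by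
  classical
  rw [MvPolynomial.monomial_eq, map_one, one_mul, Finsupp.prod]
  rw [show toAmbient R (∏ k ∈ δ.support, MvPolynomial.X k ^ δ k) =
      ∏ k ∈ δ.support, toAmbient R (MvPolynomial.X k ^ δ k) from map_prod _ _ _]
  exact Finset.prod_congr rfl fun k _ => by rw [toAmbient_pow, toAmbient_X]

lemma inv_toAmbient_monomial_mem {A : Subalgebra R (AmbientField R n)} {j : Fin n}
    (h : ∀ k, k ≠ j → (xv R k)⁻¹ ∈ A) {δ : Fin n →₀ ℕ} (hδ : δ j = 0) :
    (toAmbient R (MvPolynomial.monomial δ (1 : R)))⁻¹ ∈ A := by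
  classical
  rw [toAmbient_monomial_one, ← Finset.prod_inv_distrib]
  apply prod_mem
  intro k hk
  rw [← inv_pow]
  apply pow_mem
  apply h
  intro hkj
  subst hkj
  exact (Finsupp.mem_support_iff.mp hk) hδ

lemma nxj_toAmbient_monomial_inv {j : Fin n} {δ : Fin n →₀ ℕ} (hδ : δ j = 0) :
    NXJ R j (toAmbient R (MvPolynomial.monomial δ (1 : R)))⁻¹ :=
  (NXJ.ofPoly (Avoids.monomial hδ 1)).inv

end Aux


set_option maxHeartbeats 4000000 in
/-- For each `j` let `F_j` be a polynomial not involving `x_j`, irreducible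
and not divisible by any variable, `M_j` a monomial in the variables `x_i (i ≠ j)`,
`F̂_j = F_j / M_j` and `x'_j = F̂_j / x_j`.  Then the upper bound
`U(Σ) = R[𝐱^{±1}] ∩ ⋂_i R[𝐱_i^{±1}]` equals
`⋂_j R[x_1^{±1},…,x_{j-1}^{±1}, x_j, x'_j, x_{j+1}^{±1},…,x_n^{±1}]`. -/
theorem statement1 {R : Type*} [CommRing R] [IsDomain R] [UniqueFactorizationMonoid R]
    {n : ℕ} [NeZero n]
    (F : Fin n → MvPolynomial (Fin n) R)
    -- `F j` does not involve `x_j`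
    (hFx : ∀ j, ∀ m ∈ (F j).support, m j = 0)
    -- each `F j` is irreducible in `R[x_1,…,x_n]`
    (hFirr : ∀ j, Irreducible (F j))
    -- no `F j` is divisible by a variable
    (hFvar : ∀ j i, ¬ (MvPolynomial.X i ∣ F j))
    -- `M j` is a monomial in the variables other than `x_j`
    (M : Fin n → (Fin n →₀ ℕ)) (hM : ∀ j, M j j = 0)
    (x' : Fin n → AmbientField R n)
    (hx' : ∀ j, x' j =
      (toAmbient R (F j) / toAmbient R (MvPolynomial.monomial (M j) (1 : R))) / xv R j) :
    (Algebra.adjoin R (⋃ i : Fin n, ({xv R i, (xv R i)⁻¹} : Set (AmbientField R n)))) ⊓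
      (⨅ i : Fin n, Algebra.adjoin R (({x' i, (x' i)⁻¹} : Set (AmbientField R n)) ∪
        ⋃ j ∈ ({j : Fin n | j ≠ i}), ({xv R j, (xv R j)⁻¹} : Set (AmbientField R n)))) =
    ⨅ j : Fin n, Algebra.adjoin R (({xv R j, x' j} : Set (AmbientField R n)) ∪
        ⋃ i ∈ ({i : Fin n | i ≠ j}), ({xv R i, (xv R i)⁻¹} : Set (AmbientField R n))) := by
  classical
  have hx0 : ∀ i : Fin n, xv R i ≠ 0 := fun i => xv_ne_zero i
  have hFav : ∀ j, Avoids j (F j) := hFx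
  have hM0 : ∀ j, toAmbient R (MvPolynomial.monomial (M j) (1 : R)) ≠ 0 := fun j =>
    toAmbient_ne_zero (by simp)
  have hF0 : ∀ j, toAmbient R (F j) ≠ 0 := fun j => toAmbient_ne_zero (hFirr j).ne_zero
  set Fh : Fin n → AmbientField R n := fun j =>
    toAmbient R (F j) / toAmbient R (MvPolynomial.monomial (M j) (1 : R)) with hFh
  have hFh0 : ∀ j, Fh j ≠ 0 := fun j => div_ne_zero (hF0 j) (hM0 j)
  have hx'' : ∀ j, x' j = Fh j / xv R j := hx'
  have hx'0 : ∀ j, x' j ≠ 0 := fun j => by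
    rw [hx'' j]; exact div_ne_zero (hFh0 j) (hx0 j)
  have hx'eq : ∀ j, x' j = Fh j * (xv R j)⁻¹ := fun j => by rw [hx'' j, div_eq_mul_inv]
  have hxv_eq : ∀ j, xv R j = Fh j * (x' j)⁻¹ := fun j => by
    rw [hx'eq j, mul_inv, inv_inv, ← mul_assoc, mul_inv_cancel₀ (hFh0 j), one_mul]
  set LA : Subalgebra R (AmbientField R n) :=
    Algebra.adjoin R (⋃ i : Fin n, ({xv R i, (xv R i)⁻¹} : Set (AmbientField R n))) with hLA
  set AA : Fin n → Subalgebra R (AmbientField R n) := fun i =>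
    Algebra.adjoin R (({x' i, (x' i)⁻¹} : Set (AmbientField R n)) ∪
      ⋃ j ∈ ({j : Fin n | j ≠ i}), ({xv R j, (xv R j)⁻¹} : Set (AmbientField R n))) with hAA
  set BA : Fin n → Subalgebra R (AmbientField R n) := fun j =>
    Algebra.adjoin R (({xv R j, x' j} : Set (AmbientField R n)) ∪
      ⋃ i ∈ ({i : Fin n | i ≠ j}), ({xv R i, (xv R i)⁻¹} : Set (AmbientField R n))) with hBA
  -- generator memberships
  have hLA_x : ∀ i, xv R i ∈ LA := fun i =>
    Algebra.subset_adjoin (Set.mem_iUnion.mpr ⟨i, Set.mem_insert _ _⟩)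
  have hLA_xi : ∀ i, (xv R i)⁻¹ ∈ LA := fun i =>
    Algebra.subset_adjoin (Set.mem_iUnion.mpr ⟨i, Set.mem_insert_of_mem _ rfl⟩)
  have hAA_x' : ∀ i, x' i ∈ AA i := fun i =>
    Algebra.subset_adjoin (Or.inl (Set.mem_insert _ _))
  have hAA_x'i : ∀ i, (x' i)⁻¹ ∈ AA i := fun i =>
    Algebra.subset_adjoin (Or.inl (Set.mem_insert_of_mem _ rfl))
  have hAA_x : ∀ i k, k ≠ i → xv R k ∈ AA i := fun i k hk =>
    Algebra.subset_adjoin (Or.inr (Set.mem_iUnion₂.mpr ⟨k, hk, Set.mem_insert _ _⟩))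
  have hAA_xi : ∀ i k, k ≠ i → (xv R k)⁻¹ ∈ AA i := fun i k hk =>
    Algebra.subset_adjoin (Or.inr (Set.mem_iUnion₂.mpr ⟨k, hk, Set.mem_insert_of_mem _ rfl⟩))
  have hBA_xj : ∀ j, xv R j ∈ BA j := fun j =>
    Algebra.subset_adjoin (Or.inl (Set.mem_insert _ _))
  have hBA_x' : ∀ j, x' j ∈ BA j := fun j =>
    Algebra.subset_adjoin (Or.inl (Set.mem_insert_of_mem _ rfl))
  have hBA_x : ∀ j k, k ≠ j → xv R k ∈ BA j := fun j k hk =>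
    Algebra.subset_adjoin (Or.inr (Set.mem_iUnion₂.mpr ⟨k, hk, Set.mem_insert _ _⟩))
  have hBA_xi : ∀ j k, k ≠ j → (xv R k)⁻¹ ∈ BA j := fun j k hk =>
    Algebra.subset_adjoin (Or.inr (Set.mem_iUnion₂.mpr ⟨k, hk, Set.mem_insert_of_mem _ rfl⟩))
  -- Fhat memberships
  have hFh_memL : ∀ j, Fh j ∈ LA := fun j => by
    rw [show Fh j = toAmbient R (F j) *
        (toAmbient R (MvPolynomial.monomial (M j) (1 : R)))⁻¹ from div_eq_mul_inv _ _]
    exact mul_mem (toAmbient_mem_of_avoids (j := j) (fun k _ => hLA_x k) (hFav j))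
      (inv_toAmbient_monomial_mem (fun k _ => hLA_xi k) (hM j))
  have hFh_memA : ∀ j, Fh j ∈ AA j := fun j => by
    rw [show Fh j = toAmbient R (F j) *
        (toAmbient R (MvPolynomial.monomial (M j) (1 : R)))⁻¹ from div_eq_mul_inv _ _]
    exact mul_mem (toAmbient_mem_of_avoids (j := j) (fun k hk => hAA_x j k hk) (hFav j))
      (inv_toAmbient_monomial_mem (fun k hk => hAA_xi j k hk) (hM j))
  have hFh_memB : ∀ j, Fh j ∈ BA j := fun j => by
    rw [show Fh j = toAmbient R (F j) *
        (toAmbient R (MvPolynomial.monomial (M j) (1 : R)))⁻¹ from div_eq_mul_inv _ _]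
    exact mul_mem (toAmbient_mem_of_avoids (j := j) (fun k hk => hBA_x j k hk) (hFav j))
      (inv_toAmbient_monomial_mem (fun k hk => hBA_xi j k hk) (hM j))
  have hFh_NXJ : ∀ j, NXJ R j (Fh j) := fun j => by
    rw [show Fh j = toAmbient R (F j) *
        (toAmbient R (MvPolynomial.monomial (M j) (1 : R)))⁻¹ from div_eq_mul_inv _ _]
    exact (NXJ.ofPoly (hFav j)).mul (nxj_toAmbient_monomial_inv (hM j))
  -- easy inclusions
  have hBL : ∀ j, BA j ≤ LA := by
    intro j
    apply Algebra.adjoin_le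
    rintro z (hz | hz)
    · rcases hz with rfl | hz
      · exact hLA_x j
      · rcases Set.mem_singleton_iff.mp hz with rfl
        rw [hx'eq j]
        exact mul_mem (hFh_memL j) (hLA_xi j)
    · obtain ⟨i, _, hmem⟩ := Set.mem_iUnion₂.mp hz
      rcases hmem with rfl | hmem
      · exact hLA_x i
      · rcases Set.mem_singleton_iff.mp hmem with rfl
        exact hLA_xi i
  have hBA' : ∀ j, BA j ≤ AA j := by
    intro j
    apply Algebra.adjoin_le
    rintro z (hz | hz)
    · rcases hz with rfl | hz
      · rw [hxv_eq j]
        exact mul_mem (hFh_memA j) (hAA_x'i j)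
      · rcases Set.mem_singleton_iff.mp hz with rfl
        exact hAA_x' j
    · obtain ⟨i, hij, hmem⟩ := Set.mem_iUnion₂.mp hz
      rcases hmem with rfl | hmem
      · exact hAA_x j i hij
      · rcases Set.mem_singleton_iff.mp hmem with rfl
        exact hAA_xi j i hij
  apply le_antisymm
  · -- hard direction
    apply le_iInf
    intro j
    intro y hy
    obtain ⟨hyL, hyA'⟩ := hy
    have hyA : y ∈ AA j := (iInf_le AA j : (⨅ i, AA i) ≤ AA j) hyA'
    -- representations as Laurent-type sums
    have hyL' : y ∈ Submodule.span R
        ((Submonoid.closure (⋃ i : Fin n,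
          ({xv R i, (xv R i)⁻¹} : Set (AmbientField R n)))) : Set (AmbientField R n)) := by
      rw [← Algebra.adjoin_eq_span]
      exact (Subalgebra.mem_toSubmodule _).mpr hyL
    have hyA2 : y ∈ Submodule.span R
        ((Submonoid.closure (({x' j, (x' j)⁻¹} : Set (AmbientField R n)) ∪
          ⋃ k ∈ ({k : Fin n | k ≠ j}),
            ({xv R k, (xv R k)⁻¹} : Set (AmbientField R n)))) : Set (AmbientField R n)) := by
      rw [← Algebra.adjoin_eq_span]
      exact (Subalgebra.mem_toSubmodule _).mpr hyA
    obtain ⟨NL, fL, gL, hsumL⟩ := Submodule.mem_span_set'.mp hyL'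
    obtain ⟨NA, fA, gA, hsumA⟩ := Submodule.mem_span_set'.mp hyA2
    choose eL heL using fun i => closure_L_shape (gL i).2
    choose mA eA heAj heA using fun i => closure_A_shape (hx'0 j) (gA i).2
    have hxp : ∀ t : ℤ, x' j ^ t = Fh j ^ t * xv R j ^ (-t) := by
      intro t
      rw [hx'eq j, mul_zpow, inv_zpow, ← zpow_neg]
    set dL : Fin NL → ℤ := fun i => eL i j with hdL
    set aL : Fin NL → AmbientField R n := fun i =>
      algebraMap R (AmbientField R n) (fL i) *
        ∏ k ∈ Finset.univ.erase j, xv R k ^ eL i k with haL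
    set dA : Fin NA → ℤ := fun i => -(mA i) with hdA
    set aA : Fin NA → AmbientField R n := fun i =>
      algebraMap R (AmbientField R n) (fA i) *
        (Fh j ^ mA i * ∏ k, xv R k ^ eA i k) with haA
    have htermL : ∀ i, fL i • (gL i : AmbientField R n) = aL i * xv R j ^ dL i := by
      intro i
      rw [heL i, Algebra.smul_def, haL, hdL,
        ← Finset.prod_erase_mul Finset.univ _ (Finset.mem_univ j)]
      ring
    have htermA : ∀ i, fA i • (gA i : AmbientField R n) = aA i * xv R j ^ dA i := by
      intro i
      rw [heA i, Algebra.smul_def, haA, hdA, hxp (mA i)]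
      ring
    set E : Finset ℤ := (Finset.univ.image dL) ∪ (Finset.univ.image dA) with hE
    set cL : ℤ → AmbientField R n :=
      fun d => ∑ i ∈ Finset.univ.filter (fun i => dL i = d), aL i with hcL
    set cA : ℤ → AmbientField R n :=
      fun d => ∑ i ∈ Finset.univ.filter (fun i => dA i = d), aA i with hcA
    have h1 : ∑ d ∈ E, cL d * xv R j ^ d = y :=
      calc ∑ d ∈ E, cL d * xv R j ^ d
          = ∑ d ∈ E, ∑ i ∈ Finset.univ.filter (fun i => dL i = d), aL i * xv R j ^ dL i := by
            refine Finset.sum_congr rfl fun d _ => ?_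
            rw [hcL, Finset.sum_mul]
            exact Finset.sum_congr rfl fun i hi => by
              rw [(Finset.mem_filter.mp hi).2]
        _ = ∑ i, aL i * xv R j ^ dL i :=
            Finset.sum_fiberwise_of_maps_to
              (fun i _ => Finset.mem_union_left _ (Finset.mem_image_of_mem dL (Finset.mem_univ i))) _
        _ = ∑ i, fL i • (gL i : AmbientField R n) :=
            Finset.sum_congr rfl fun i _ => (htermL i).symm
        _ = y := hsumL
    have h2 : ∑ d ∈ E, cA d * xv R j ^ d = y :=
      calc ∑ d ∈ E, cA d * xv R j ^ d
          = ∑ d ∈ E, ∑ i ∈ Finset.univ.filter (fun i => dA i = d), aA i * xv R j ^ dA i := by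
            refine Finset.sum_congr rfl fun d _ => ?_
            rw [hcA, Finset.sum_mul]
            exact Finset.sum_congr rfl fun i hi => by
              rw [(Finset.mem_filter.mp hi).2]
        _ = ∑ i, aA i * xv R j ^ dA i :=
            Finset.sum_fiberwise_of_maps_to
              (fun i _ => Finset.mem_union_right _ (Finset.mem_image_of_mem dA (Finset.mem_univ i))) _
        _ = ∑ i, fA i • (gA i : AmbientField R n) :=
            Finset.sum_congr rfl fun i _ => (htermA i).symm
        _ = y := hsumA
    have hNXL : ∀ d, NXJ R j (cL d) := by
      intro d
      rw [hcL]
      refine NXJ.sum _ _ fun i _ => ?_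
      rw [haL]
      refine (NXJ.algebraMap' j (fL i)).mul (NXJ.prod _ _ fun k hk => ?_)
      exact (NXJ.xv (Finset.ne_of_mem_erase hk)).zpow _
    have hNXA : ∀ d, NXJ R j (cA d) := by
      intro d
      rw [hcA]
      refine NXJ.sum _ _ fun i _ => ?_
      rw [haA]
      refine (NXJ.algebraMap' j (fA i)).mul (((hFh_NXJ j).zpow _).mul
        (NXJ.prod _ _ fun k _ => ?_))
      by_cases hkj : k = j
      · rw [hkj, heAj i, zpow_zero]
        exact NXJ.one j
      · exact (NXJ.xv hkj).zpow _
    have hEqAll : ∀ d ∈ E, cL d - cA d = 0 := by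
      apply nxj_indep E (fun d => cL d - cA d)
      · intro d _
        rw [sub_eq_add_neg]
        exact (hNXL d).add (hNXA d).neg
      · simp only [sub_mul]
        rw [Finset.sum_sub_distrib, h1, h2, sub_self]
    have hEq : ∀ d ∈ E, cL d = cA d := fun d hd => sub_eq_zero.mp (hEqAll d hd)
    rw [← h1]
    apply sum_mem
    intro d hd
    rcases le_or_gt 0 d with hd0 | hd0
    · apply mul_mem
      · rw [hcL]
        apply sum_mem
        intro i _
        rw [haL]
        refine mul_mem (Subalgebra.algebraMap_mem _ _) (prod_mem fun k hk => ?_)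
        exact zpow_mem_pair (hBA_x j k (Finset.ne_of_mem_erase hk))
          (hBA_xi j k (Finset.ne_of_mem_erase hk)) _
      · rw [show xv R j ^ d = xv R j ^ d.toNat by
          rw [← zpow_natCast, Int.toNat_of_nonneg hd0]]
        exact pow_mem (hBA_xj j) _
    · rw [hEq d hd, hcA, Finset.sum_mul]
      apply sum_mem
      intro i hi
      have hdi : dA i = d := (Finset.mem_filter.mp hi).2
      have hmi : mA i = -d := by rw [← hdi]; simp [hdA]
      have hxnat : x' j ^ (mA i).toNat = Fh j ^ mA i * xv R j ^ d := by
        rw [← zpow_natCast (x' j), Int.toNat_of_nonneg (by omega : (0:ℤ) ≤ mA i),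
          hxp (mA i), hmi, neg_neg]
      have key : aA i * xv R j ^ d =
          algebraMap R (AmbientField R n) (fA i) *
            ((∏ k, xv R k ^ eA i k) * x' j ^ (mA i).toNat) := by
        rw [hxnat, haA]
        ring
      rw [key]
      refine mul_mem (Subalgebra.algebraMap_mem _ _)
        (mul_mem (prod_mem fun k _ => ?_) (pow_mem (hBA_x' j) _))
      by_cases hkj : k = j
      · rw [hkj, heAj i, zpow_zero]
        exact one_mem _
      · exact zpow_mem_pair (hBA_x j k hkj) (hBA_xi j k hkj) _
  · -- easy direction
    have j0 : Fin n := ⟨0, Nat.pos_of_ne_zero (NeZero.ne n)⟩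
    exact le_inf ((iInf_le BA j0).trans (hBL j0))
      (le_iInf fun i => (iInf_le BA i).trans (hBA' i))
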